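/- arXiv:1610.03944 — 4 statements merged into one kernel-verified Lean document; each statement's English description precedes it below -/
import Mathlib

section
/- Let X have density p(x) = exp(theta . x - psi(theta)) g(x) with respect to Lebesgue measure on R^n, where g is symmetric under permutations. If theta_1 >= theta_2, then X_1 is stochastically larger than X_2, i.e., P[X_1 >= a] >= P[X_2 >= a] for all real a. -/
open MeasureTheory

/-- In an exponential family with permutation-symmetric carrier, `θ 0 ≥ θ 1` implies
`X 0` is stochastically larger than `X 1`. -/
theorem expFam_stochastic_order {n : ℕ} (θ : Fin (n + 2) → ℝ) (ψ : ℝ)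
    (g : (Fin (n + 2) → ℝ) → ℝ) (hg : ∀ x, 0 ≤ g x)
    (hsymm : ∀ (x : Fin (n + 2) → ℝ) (σ : Equiv.Perm (Fin (n + 2))), g (x ∘ σ) = g x)
    (p : (Fin (n + 2) → ℝ) → ℝ)
    (hp : ∀ x, p x = Real.exp ((∑ i, θ i * x i) - ψ) * g x)
    (hint : Integrable p)
    (hprob : ∫ x, p x = 1)
    (hθ : θ 0 ≥ θ 1) :
    ∀ a : ℝ, ∫ x in {x : Fin (n + 2) → ℝ | x 0 ≥ a}, p x ≥
      ∫ x in {x : Fin (n + 2) → ℝ | x 1 ≥ a}, p x := by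
  intro a
  classical
  have h01 : (0 : Fin (n + 2)) ≠ 1 := by
    intro h
    have := congrArg Fin.val h
    simp at this
  set σ : Equiv.Perm (Fin (n + 2)) := Equiv.swap 0 1 with hσdef
  set e : (Fin (n + 2) → ℝ) ≃ᵐ (Fin (n + 2) → ℝ) :=
    MeasurableEquiv.piCongrLeft (fun _ => ℝ) σ.symm with hedef
  have hecoe : ∀ x : Fin (n + 2) → ℝ, e x = x ∘ σ := by
    intro x
    funext i
    simp [hedef, MeasurableEquiv.piCongrLeft, Equiv.piCongrLeft]
  have hmp : MeasurePreserving e volume volume :=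
    volume_measurePreserving_piCongrLeft (fun _ => ℝ) σ.symm
  have hemb : MeasurableEmbedding e := e.measurableEmbedding
  have hσ0 : σ 0 = 1 := Equiv.swap_apply_left 0 1
  have hσ1 : σ 1 = 0 := Equiv.swap_apply_right 0 1
  -- the two half-spaces and their intersection
  set S : Set (Fin (n + 2) → ℝ) := {x | x 0 ≥ a} with hSdef
  set B : Set (Fin (n + 2) → ℝ) := {x | x 1 ≥ a} with hBdef
  have hSmeas : MeasurableSet S :=
    measurableSet_le measurable_const (measurable_pi_apply 0)
  have hBmeas : MeasurableSet B :=
    measurableSet_le measurable_const (measurable_pi_apply 1)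
  -- q = p ∘ e
  set q : (Fin (n + 2) → ℝ) → ℝ := fun x => p (e x) with hqdef
  have hqint : Integrable q := by
    have := (hmp.integrable_comp_emb hemb (g := p)).mpr hint
    exact this
  -- change of variables: ∫_{x1 ≥ a} p = ∫_S q
  have hpre : e ⁻¹' B = S := by
    ext x
    simp only [Set.mem_preimage, hBdef, hSdef, Set.mem_setOf_eq, hecoe,
      Function.comp_apply, hσ1]
  have hchange : ∫ x in B, p x = ∫ x in S, q x := by
    rw [← hmp.setIntegral_preimage_emb hemb p B, hpre]
  rw [hchange]
  -- split S into S ∩ B and S \ B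
  have hintpS : IntegrableOn p S := hint.integrableOn
  have hintqS : IntegrableOn q S := hqint.integrableOn
  have hsplit_p : (∫ x in S ∩ B, p x) + ∫ x in S \ B, p x = ∫ x in S, p x :=
    integral_inter_add_diff hBmeas hintpS
  have hsplit_q : (∫ x in S ∩ B, q x) + ∫ x in S \ B, q x = ∫ x in S, q x :=
    integral_inter_add_diff hBmeas hintqS
  -- on the symmetric part S ∩ B the integrals agree
  have hinv : e ⁻¹' (S ∩ B) = S ∩ B := by
    ext x
    simp only [Set.mem_preimage, Set.mem_inter_iff, hSdef, hBdef, Set.mem_setOf_eq,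
      hecoe, Function.comp_apply, hσ0, hσ1]
    tauto
  have hsym_eq : ∫ x in S ∩ B, q x = ∫ x in S ∩ B, p x := by
    have := hmp.setIntegral_preimage_emb hemb p (S ∩ B)
    rw [hinv] at this
    exact this
  -- on S \ B we have the pointwise inequality q ≤ p
  have hpoint : ∀ x ∈ S \ B, q x ≤ p x := by
    intro x hx
    obtain ⟨hxS, hxB⟩ := hx
    have hx0 : a ≤ x 0 := hxS
    have hx1 : x 1 < a := not_le.mp hxB
    have hq : q x = Real.exp ((∑ i, θ i * x (σ i)) - ψ) * g x := by
      rw [hqdef]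
      simp only [hecoe]
      rw [hp (x ∘ σ), hsymm x σ]
      rfl
    rw [hq, hp x]
    have hsum : ∑ i, θ i * x (σ i) ≤ ∑ i, θ i * x i := by
      have hdiff : ∑ i, (θ i * x i - θ i * x (σ i)) = (θ 0 - θ 1) * (x 0 - x 1) := by
        rw [Finset.sum_eq_add_of_mem 0 1 (Finset.mem_univ _) (Finset.mem_univ _) h01]
        · rw [hσ0, hσ1]; ring
        · intro c _ hc
          rw [hσdef, Equiv.swap_apply_of_ne_of_ne hc.1 hc.2]
          ring
      have hnn : 0 ≤ (θ 0 - θ 1) * (x 0 - x 1) :=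
        mul_nonneg (sub_nonneg.mpr hθ) (sub_nonneg.mpr (hx1.le.trans hx0))
      have := hdiff ▸ hnn
      rw [Finset.sum_sub_distrib] at this
      linarith
    exact mul_le_mul_of_nonneg_right
      (Real.exp_le_exp.mpr (by linarith)) (hg x)
  have hmono : ∫ x in S \ B, q x ≤ ∫ x in S \ B, p x :=
    setIntegral_mono_on (hqint.integrableOn) (hint.integrableOn)
      (hSmeas.diff hBmeas) hpoint
  rw [ge_iff_le, ← hsplit_p, ← hsplit_q]
  exact add_le_add (le_of_eq hsym_eq) hmono
end

section
/- Let X have density exp(theta . x - psi(theta)) g(x) on R^n with g symmetric under permutations, and suppose theta_1 >= theta_j for all j. Then P[X_1 >= max_{j > 1} X_j] >= 1/n. -/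
open MeasureTheory

/-- If population `0` has the largest natural parameter in a permutation-symmetric-carrier
exponential family on `ℝ^(n+1)`, it wins with probability at least `1 / (n + 1)`. -/
theorem expFam_best_wins_prob {n : ℕ} (θ : Fin (n + 1) → ℝ) (ψ : ℝ)
    (g : (Fin (n + 1) → ℝ) → ℝ) (hg : ∀ x, 0 ≤ g x)
    (hsymm : ∀ (x : Fin (n + 1) → ℝ) (σ : Equiv.Perm (Fin (n + 1))), g (x ∘ σ) = g x)
    (p : (Fin (n + 1) → ℝ) → ℝ)
    (hp : ∀ x, p x = Real.exp ((∑ i, θ i * x i) - ψ) * g x)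
    (hint : Integrable p)
    (hprob : ∫ x, p x = 1)
    (hθ : ∀ j, θ 0 ≥ θ j) :
    ∫ x in {x : Fin (n + 1) → ℝ | ∀ j, j ≠ 0 → x j ≤ x 0}, p x ≥ 1 / (n + 1) := by
  classical
  have hAgoal : {x : Fin (n + 1) → ℝ | ∀ j, j ≠ 0 → x j ≤ x 0} =
      {x : Fin (n + 1) → ℝ | ∀ j, j ≠ (0 : Fin (n+1)) → x j ≤ x 0} := rfl
  set A : Fin (n + 1) → Set (Fin (n + 1) → ℝ) :=
    fun i => {x | ∀ j, j ≠ i → x j ≤ x i} with hA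
  have hAmeas : ∀ i, MeasurableSet (A i) := by
    intro i
    have : A i = ⋂ j, {x : Fin (n + 1) → ℝ | j ≠ i → x j ≤ x i} := by
      ext x; simp [hA, Set.mem_iInter]
    rw [this]
    refine MeasurableSet.iInter fun j => ?_
    by_cases h : j = i
    · simp [h]
    · have : {x : Fin (n + 1) → ℝ | j ≠ i → x j ≤ x i}
          = {x : Fin (n + 1) → ℝ | x j ≤ x i} := by
        ext x; simp [h]
      rw [this]
      exact measurableSet_le (measurable_pi_apply j) (measurable_pi_apply i)
  have hpnn : ∀ x, 0 ≤ p x := fun x => by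
    rw [hp]; exact mul_nonneg (Real.exp_pos _).le (hg x)
  -- Step A : for each i, ∫ over A i ≤ ∫ over A 0
  have hkey : ∀ i, ∫ x in A i, p x ≤ ∫ x in A 0, p x := by
    intro i
    by_cases hi0 : i = 0
    · subst hi0; exact le_refl _
    · -- the swap permutation
      set σ : Equiv.Perm (Fin (n + 1)) := Equiv.swap 0 i with hσ
      set T : (Fin (n + 1) → ℝ) ≃ᵐ (Fin (n + 1) → ℝ) :=
        MeasurableEquiv.piCongrLeft (fun _ => ℝ) σ.symm with hT
      have hTapp : ∀ (x : Fin (n + 1) → ℝ) (j : Fin (n + 1)), T x j = x (σ j) := by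
        intro x j
        have := MeasurableEquiv.piCongrLeft_apply_apply (σ.symm) (β := fun _ => ℝ) x (σ j)
        simpa using this
      have hTfun : ∀ x : Fin (n + 1) → ℝ, T x = x ∘ σ := by
        intro x; funext j; exact hTapp x j
      have hTmp : MeasurePreserving T volume volume :=
        volume_measurePreserving_piCongrLeft (fun _ => ℝ) σ.symm
      have hpre : T ⁻¹' (A i) = A 0 := by
        ext x
        simp only [Set.mem_preimage, hA, Set.mem_setOf_eq]
        constructor
        · intro h k hk
          have hσk : σ k ≠ i := by
            intro hc
            apply hk
            have : σ k = σ 0 := by rw [hc, hσ]; simp [Equiv.swap_apply_left]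
            exact σ.injective this
          have := h (σ k) hσk
          rw [hTapp, hTapp] at this
          have hσσk : σ (σ k) = k := by rw [hσ]; exact Equiv.swap_apply_self 0 i k
          have hσi : σ i = 0 := by rw [hσ]; exact Equiv.swap_apply_right 0 i
          rwa [hσσk, hσi] at this
        · intro h k hk
          rw [hTapp, hTapp]
          have hσi : σ i = 0 := by rw [hσ]; exact Equiv.swap_apply_right 0 i
          rw [hσi]
          have hσk : σ k ≠ 0 := by
            intro hc
            apply hk
            have : σ k = σ i := by rw [hc, hσi]
            exact σ.injective this
          exact h (σ k) hσk
      have hchg : ∫ x in A i, p x = ∫ x in A 0, p (T x) := by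
        rw [← hpre]
        exact (hTmp.setIntegral_preimage_emb T.measurableEmbedding p (A i)).symm
      rw [hchg]
      -- pointwise comparison on A 0
      have hptle : ∀ x ∈ A 0, p (T x) ≤ p x := by
        intro x hx
        rw [hTfun, hp, hp]
        have hgsy : g (x ∘ σ) = g x := hsymm x σ
        rw [hgsy]
        apply mul_le_mul_of_nonneg_right _ (hg x)
        apply Real.exp_le_exp.mpr
        apply sub_le_sub_right
        -- ∑ θ j * x (σ j) ≤ ∑ θ j * x j
        have hdiff : (∑ j, θ j * x j) - (∑ j, θ j * (x ∘ σ) j)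
            = (θ 0 - θ i) * (x 0 - x i) := by
          rw [← Finset.sum_sub_distrib]
          have hzero : ∀ j ∈ Finset.univ,
              j ∉ ({0, i} : Finset (Fin (n + 1))) →
              θ j * x j - θ j * (x ∘ σ) j = 0 := by
            intro j _ hj
            simp only [Finset.mem_insert, Finset.mem_singleton, not_or] at hj
            have : σ j = j := Equiv.swap_apply_of_ne_of_ne hj.1 hj.2
            simp [Function.comp, hσ] at *
            rw [this]
            ring
          rw [← Finset.sum_subset (Finset.subset_univ ({0, i} : Finset (Fin (n + 1)))) hzero]
          rw [Finset.sum_pair (Ne.symm hi0)]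
          have h1 : σ 0 = i := by rw [hσ]; exact Equiv.swap_apply_left 0 i
          have h2 : σ i = 0 := by rw [hσ]; exact Equiv.swap_apply_right 0 i
          simp only [Function.comp_apply, h1, h2]
          ring
        have hx0 : x i ≤ x 0 := hx i hi0
        have : 0 ≤ (∑ j, θ j * x j) - (∑ j, θ j * (x ∘ σ) j) := by
          rw [hdiff]
          exact mul_nonneg (sub_nonneg.mpr (hθ i)) (sub_nonneg.mpr hx0)
        linarith
      have hintT : Integrable (fun x => p (T x)) :=
        (hTmp.integrable_comp_emb T.measurableEmbedding).mpr hint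
      exact setIntegral_mono_on hintT.integrableOn hint.integrableOn (hAmeas 0) hptle
  -- Step B : 1 ≤ ∑ i, ∫ over A i
  have hcover : (⋃ i, A i) = Set.univ := by
    ext x
    simp only [Set.mem_iUnion, Set.mem_univ, iff_true, hA, Set.mem_setOf_eq]
    obtain ⟨i, hi⟩ := Finite.exists_max x
    exact ⟨i, fun j _ => hi j⟩
  have hAint : ∀ i, ∫⁻ x in A i, ENNReal.ofReal (p x)
      = ENNReal.ofReal (∫ x in A i, p x) := by
    intro i
    exact (ofReal_integral_eq_lintegral_ofReal hint.integrableOn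
      (Filter.Eventually.of_forall hpnn)).symm
  have h1 : ENNReal.ofReal 1 ≤ ∑ i, ENNReal.ofReal (∫ x in A i, p x) := by
    calc ENNReal.ofReal 1 = ENNReal.ofReal (∫ x, p x) := by rw [hprob]
    _ = ∫⁻ x, ENNReal.ofReal (p x) :=
        ofReal_integral_eq_lintegral_ofReal hint (Filter.Eventually.of_forall hpnn)
    _ = ∫⁻ x in ⋃ i, A i, ENNReal.ofReal (p x) := by rw [hcover, Measure.restrict_univ]
    _ ≤ ∑' i, ∫⁻ x in A i, ENNReal.ofReal (p x) := lintegral_iUnion_le _ _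
    _ = ∑ i, ∫⁻ x in A i, ENNReal.ofReal (p x) := tsum_fintype _
    _ = ∑ i, ENNReal.ofReal (∫ x in A i, p x) := by
        exact Finset.sum_congr rfl fun i _ => hAint i
  have hnn : ∀ i, 0 ≤ ∫ x in A i, p x := fun i =>
    setIntegral_nonneg (hAmeas i) fun x _ => hpnn x
  have h2 : (1 : ℝ) ≤ ∑ i, ∫ x in A i, p x := by
    have := h1
    rw [← ENNReal.ofReal_sum_of_nonneg (fun i _ => hnn i)] at this
    exact (ENNReal.ofReal_le_ofReal_iff (Finset.sum_nonneg fun i _ => hnn i)).mp this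
  have h3 : ∑ i, ∫ x in A i, p x ≤ (n + 1) * ∫ x in A 0, p x := by
    calc ∑ i : Fin (n + 1), ∫ x in A i, p x
        ≤ ∑ _i : Fin (n + 1), ∫ x in A 0, p x :=
          Finset.sum_le_sum fun i _ => hkey i
    _ = (n + 1) * ∫ x in A 0, p x := by
        rw [Finset.sum_const, Finset.card_univ, Fintype.card_fin]
        push_cast
        ring
  have hfinal : (1 : ℝ) ≤ (n + 1) * ∫ x in A 0, p x := le_trans h2 h3
  have hpos : (0 : ℝ) < n + 1 := by positivity
  have hgoal : ∫ x in {x : Fin (n + 1) → ℝ | ∀ j, j ≠ 0 → x j ≤ x 0}, p x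
      = ∫ x in A 0, p x := rfl
  rw [ge_iff_le, hgoal, div_le_iff₀ hpos]
  linarith [hfinal]
end

section
/- Let g: R^3 -> [0, infinity) be Schur-concave with X_1 >= X_2 >= X_3 and X_2 < M_13 := (X_1 + X_3)/2, and suppose all integrals below are finite and positive. Define p_12 = (integral over [0, inf) of g(X_1 + z, X_2 - z, X_3) dz) / (integral over [-D_12, inf) of g(X_1 + z, X_2 - z, X_3) dz) with D_12 = (X_1 - X_2)/2, and p_13 = (integral over [0, inf) of g(X_1 + z, X_2, X_3 - z) dz) / (integral over [-D_13, inf) of g(X_1 + z, X_2, X_3 - z) dz) with D_13 = (X_1 - X_3)/2. Then p_12 >= p_13. -/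
open MeasureTheory

/-- The decreasing rearrangement of a tuple of reals. -/
noncomputable def decSort {n : ℕ} (a : Fin n → ℝ) : Fin n → ℝ :=
  a ∘ Tuple.sort (fun i => -a i)

/-- `a` majorizes `b`: partial sums of decreasing rearrangements dominate, total sums equal. -/
noncomputable def Majorizes {n : ℕ} (a b : Fin n → ℝ) : Prop :=
  (∀ k : ℕ, k < n →
      ∑ j ∈ Finset.univ.filter (fun j : Fin n => (j : ℕ) < k), decSort a j ≥
        ∑ j ∈ Finset.univ.filter (fun j : Fin n => (j : ℕ) < k), decSort b j) ∧
  ∑ j, a j = ∑ j, b j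

/-- `g` is Schur-concave if majorization reverses its ordering. -/
noncomputable def SchurConcave {n : ℕ} (g : (Fin n → ℝ) → ℝ) : Prop :=
  ∀ x y : Fin n → ℝ, Majorizes x y → g x ≤ g y

/-!
For `z ≥ 0` the point `(X₁ + z, X₂, X₃ - z)` majorizes `(X₁ + z, X₂ - z, X₃)`, and for
`-D₁₂ ≤ z ≤ 0` the reverse holds. By Schur-concavity the integrand of `p₁₂` therefore dominates
that of `p₁₃` on `[0, ∞)` and is dominated by it on `[-D₁₂, 0)`. Writing `p = N / (T + N)` with
`N` the mass on `[0, ∞)` and `T` the mass on `[-D, 0)`, `p₁₂` has the larger `N` and, since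
`[-D₁₂, 0) ⊆ [-D₁₃, 0)`, the smaller `T`; and `N / (T + N)` increases in `N` and decreases in `T`.
-/

open Set

lemma decSort_apply_symm {n : ℕ} (a : Fin n → ℝ) (j : Fin n) :
    decSort a ((Tuple.sort fun i => -a i).symm j) = a j := by
  simp [decSort]

lemma decSort_antitone {n : ℕ} (a : Fin n → ℝ) : Antitone (decSort a) := fun _ _ hij =>
  neg_le_neg_iff.mp (Tuple.monotone_sort (fun i => -a i) hij)

lemma sum_decSort {n : ℕ} (a : Fin n → ℝ) : ∑ j, decSort a j = ∑ j, a j :=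
  Equiv.sum_comp (Tuple.sort fun i => -a i) a

lemma le_decSort_zero {n : ℕ} (a : Fin (n + 1) → ℝ) (j : Fin (n + 1)) : a j ≤ decSort a 0 :=
  decSort_apply_symm a j ▸ decSort_antitone a (Fin.zero_le _)

lemma decSort_last_le {n : ℕ} (a : Fin (n + 1) → ℝ) (j : Fin (n + 1)) :
    decSort a (Fin.last n) ≤ a j :=
  decSort_apply_symm a j ▸ decSort_antitone a (Fin.le_last _)

lemma majorizes_fin_three {a b : Fin 3 → ℝ} (hsum : a 0 + a 1 + a 2 = b 0 + b 1 + b 2)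
    (hmax : ∃ i, ∀ j, b j ≤ a i) (hmin : ∃ i, ∀ j, a i ≤ b j) : Majorizes a b := by
  have hsa := sum_decSort a
  have hsb := sum_decSort b
  simp only [Fin.sum_univ_three] at hsa hsb
  refine ⟨fun k hk => ?_, by simpa only [Fin.sum_univ_three] using hsum⟩
  simp only [Finset.sum_filter, Fin.sum_univ_three, Fin.val_zero, Fin.val_one, Fin.val_two]
  interval_cases k <;> norm_num
  · obtain ⟨i, hi⟩ := hmax
    exact (hi _).trans (le_decSort_zero a i)
  · obtain ⟨i, hi⟩ := hmin
    have : decSort a 2 ≤ decSort b 2 := (decSort_last_le a i).trans (hi _)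
    linarith

section Transfer

variable {g : (Fin 3 → ℝ) → ℝ} {X₁ X₂ X₃ z : ℝ}

lemma SchurConcave.shift_third_le_shift_second (hg : SchurConcave g) (h12 : X₁ ≥ X₂)
    (h23 : X₂ ≥ X₃) (hz : 0 ≤ z) : g ![X₁ + z, X₂, X₃ - z] ≤ g ![X₁ + z, X₂ - z, X₃] := by
  refine hg _ _ (majorizes_fin_three ?_ ⟨0, fun j => ?_⟩ ⟨2, fun j => ?_⟩)
  all_goals try fin_cases j
  all_goals simp only [Fin.zero_eta, Fin.mk_one, Fin.reduceFinMk, Matrix.cons_val_zero,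
    Matrix.cons_val_one, Matrix.cons_val]; linarith

lemma SchurConcave.shift_second_le_shift_third (hg : SchurConcave g) (h12 : X₁ ≥ X₂)
    (h23 : X₂ ≥ X₃) (hz : -((X₁ - X₂) / 2) ≤ z) (hz' : z ≤ 0) :
    g ![X₁ + z, X₂ - z, X₃] ≤ g ![X₁ + z, X₂, X₃ - z] := by
  refine hg _ _ (majorizes_fin_three ?_ ⟨0, fun j => ?_⟩ ⟨2, fun j => ?_⟩)
  all_goals try fin_cases j
  all_goals simp only [Fin.zero_eta, Fin.mk_one, Fin.reduceFinMk, Matrix.cons_val_zero,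
    Matrix.cons_val_one, Matrix.cons_val]; linarith

end Transfer

lemma div_add_self_le_div_add_self {x x' c c' : ℝ} (hx : 0 ≤ x) (hxx' : x ≤ x') (hc' : 0 ≤ c')
    (hc'c : c' ≤ c) : x / (c + x) ≤ x' / (c' + x') := by
  rcases hx.eq_or_lt with rfl | hx
  · simp only [zero_div]
    positivity
  rw [div_le_div_iff₀ (by linarith) (by linarith)]
  nlinarith

theorem integral_Ici_zero_div_integral_Ici_le {f h : ℝ → ℝ} {d d' : ℝ} (hd : 0 ≤ d)
    (hdd' : d ≤ d') (hf : IntegrableOn f (Ici (-d))) (hh : IntegrableOn h (Ici (-d')))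
    (hf₀ : 0 ≤ f) (hh₀ : 0 ≤ h) (hright : ∀ z ∈ Ici 0, h z ≤ f z)
    (hleft : ∀ z ∈ Ico (-d) 0, f z ≤ h z) :
    (∫ z in Ici 0, h z) / ∫ z in Ici (-d'), h z ≤ (∫ z in Ici 0, f z) / ∫ z in Ici (-d), f z := by
  have hf_split := intervalIntegral.integral_Ici_sub_Ici hf (by linarith : -d ≤ 0)
  have hh_split := intervalIntegral.integral_Ici_sub_Ici hh (by linarith : -d' ≤ 0)
  rw [sub_eq_iff_eq_add] at hf_split hh_split
  rw [hf_split, hh_split]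
  have hf_right : IntegrableOn f (Ici 0) := hf.mono_set (Ici_subset_Ici.mpr (by linarith))
  have hh_right : IntegrableOn h (Ici 0) := hh.mono_set (Ici_subset_Ici.mpr (by linarith))
  have hh_left : IntegrableOn h (Ico (-d') 0) := hh.mono_set Ico_subset_Ici_self
  refine div_add_self_le_div_add_self (setIntegral_nonneg measurableSet_Ici fun z _ => hh₀ z)
    (setIntegral_mono_on hh_right hf_right measurableSet_Ici hright)
    (setIntegral_nonneg measurableSet_Ico fun z _ => hf₀ z) ?_
  calc ∫ z in Ico (-d) 0, f z
      ≤ ∫ z in Ico (-d) 0, h z :=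
        setIntegral_mono_on (hf.mono_set Ico_subset_Ici_self)
          (hh_left.mono_set (Ico_subset_Ico_left (by linarith))) measurableSet_Ico hleft
    _ ≤ ∫ z in Ico (-d') 0, h z :=
        setIntegral_mono_set hh_left (.of_forall hh₀)
          (Ico_subset_Ico_left (by linarith)).eventuallyLE

theorem pvalue_comparison_general (g : (Fin 3 → ℝ) → ℝ) (hg : SchurConcave g)
    (hpos : ∀ x, 0 ≤ g x) (X₁ X₂ X₃ : ℝ) (h12 : X₁ ≥ X₂) (h23 : X₂ ≥ X₃)
    (hint12 : IntegrableOn (fun z => g ![X₁ + z, X₂ - z, X₃]) (Set.Ici (-((X₁ - X₂) / 2))))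
    (hint13 : IntegrableOn (fun z => g ![X₁ + z, X₂, X₃ - z]) (Set.Ici (-((X₁ - X₃) / 2)))) :
    (∫ z in Set.Ici (0 : ℝ), g ![X₁ + z, X₂ - z, X₃]) /
        (∫ z in Set.Ici (-((X₁ - X₂) / 2)), g ![X₁ + z, X₂ - z, X₃]) ≥
      (∫ z in Set.Ici (0 : ℝ), g ![X₁ + z, X₂, X₃ - z]) /
        (∫ z in Set.Ici (-((X₁ - X₃) / 2)), g ![X₁ + z, X₂, X₃ - z]) :=
  integral_Ici_zero_div_integral_Ici_le (by linarith) (by linarith) hint12 hint13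
    (fun _ => hpos _) (fun _ => hpos _) (fun _ hz => hg.shift_third_le_shift_second h12 h23 hz)
    (fun _ hz => hg.shift_second_le_shift_third h12 h23 hz.1 hz.2.le)

/-- The winner-versus-runner-up p-value is the largest: `p₁₂ ≥ p₁₃`. -/
theorem pvalue_comparison (g : (Fin 3 → ℝ) → ℝ) (hg : SchurConcave g)
    (hpos : ∀ x, 0 ≤ g x) (X₁ X₂ X₃ : ℝ) (h12 : X₁ ≥ X₂) (h23 : X₂ ≥ X₃)
    (hM : X₂ < (X₁ + X₃) / 2)
    (hint12 : IntegrableOn (fun z => g ![X₁ + z, X₂ - z, X₃]) (Set.Ici (-((X₁ - X₂) / 2))))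
    (hint13 : IntegrableOn (fun z => g ![X₁ + z, X₂, X₃ - z]) (Set.Ici (-((X₁ - X₃) / 2))))
    (hden12 : 0 < ∫ z in Set.Ici (-((X₁ - X₂) / 2)), g ![X₁ + z, X₂ - z, X₃])
    (hden13 : 0 < ∫ z in Set.Ici (-((X₁ - X₃) / 2)), g ![X₁ + z, X₂, X₃ - z]) :
    (∫ z in Set.Ici (0 : ℝ), g ![X₁ + z, X₂ - z, X₃]) /
        (∫ z in Set.Ici (-((X₁ - X₂) / 2)), g ![X₁ + z, X₂ - z, X₃]) ≥
      (∫ z in Set.Ici (0 : ℝ), g ![X₁ + z, X₂, X₃ - z]) /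
        (∫ z in Set.Ici (-((X₁ - X₃) / 2)), g ![X₁ + z, X₂, X₃ - z]) :=
  pvalue_comparison_general g hg hpos X₁ X₂ X₃ h12 h23 hint12 hint13
end

section
/- The function g: Z^n -> Z counting the number of orientations of the complete graph K_n with out-degree sequence x (i.e., the number of round-robin tournament outcomes in which player j has exactly x_j wins) is Schur-concave: if x majorizes y (as integer vectors with equal sums), then g(x) <= g(y). -/
/-- The matches of a round-robin tournament among `n` players. -/
abbrev BTPairs (n : ℕ) := {p : Fin n × Fin n // p.1 < p.2}

/-- The number of wins of player `j` in tournament outcome `o` (an orientation of `K n`). -/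
def winCount {n : ℕ} (o : BTPairs n → Bool) (j : Fin n) : ℕ :=
  (Finset.univ.filter (fun p : BTPairs n =>
    (o p = true ∧ p.1.1 = j) ∨ (o p = false ∧ p.1.2 = j))).card

/-- The number of orientations of the complete graph `K n` with out-degree sequence `x`. -/
def orientationCount {n : ℕ} (x : Fin n → ℕ) : ℕ :=
  (Finset.univ.filter (fun o : BTPairs n → Bool => winCount o = x)).card

def beats {n : ℕ} (o : BTPairs n → Bool) (a b : Fin n) : Bool :=
  if h : a < b then o ⟨(a, b), h⟩ else if h : b < a then !o ⟨(b, a), h⟩ else false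

lemma beats_irrefl {n : ℕ} (o : BTPairs n → Bool) (a : Fin n) : beats o a a = false := by
  simp [beats]

lemma beats_of_lt {n : ℕ} (o : BTPairs n → Bool) {a b : Fin n} (h : a < b) :
    beats o a b = o ⟨(a, b), h⟩ := by simp [beats, h]

lemma beats_of_gt {n : ℕ} (o : BTPairs n → Bool) {a b : Fin n} (h : b < a) :
    beats o a b = !o ⟨(b, a), h⟩ := by
  have : ¬ a < b := by omega
  simp [beats, h, this]

lemma beats_asymm {n : ℕ} (o : BTPairs n → Bool) {a b : Fin n} (h : a ≠ b) :
    beats o a b = !beats o b a := by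
  rcases lt_or_gt_of_ne h with h' | h'
  · rw [beats_of_lt o h', beats_of_gt o h', Bool.not_not]
  · rw [beats_of_gt o h', beats_of_lt o h']

lemma winCount_eq {n : ℕ} (o : BTPairs n → Bool) (j : Fin n) :
    winCount o j = (Finset.univ.filter (fun k => beats o j k = true)).card := by
  unfold winCount
  apply Finset.card_bij (fun p _ => if p.1.1 = j then p.1.2 else p.1.1)
  · intro p hp
    simp only [Finset.mem_filter, Finset.mem_univ, true_and] at hp ⊢
    have hlt := p.2
    have hpe : (⟨(p.1.1, p.1.2), hlt⟩ : BTPairs n) = p := rfl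
    rcases hp with ⟨ho, h1⟩ | ⟨ho, h2⟩
    · rw [if_pos h1, ← h1, beats_of_lt o hlt, hpe, ho]
    · have h1 : p.1.1 ≠ j := by
        intro hc; rw [hc] at hlt; rw [h2] at hlt; exact lt_irrefl j hlt
      rw [if_neg h1, ← h2, beats_of_gt o hlt, hpe, ho]
      rfl
  · intro p hp q hq hpq
    simp only [Finset.mem_filter, Finset.mem_univ, true_and] at hp hq
    have hpl := p.2
    have hql := q.2
    have hp1 : p.1.1 = j → o p = true := by
      intro h; rcases hp with ⟨ho, _⟩ | ⟨_, h2⟩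
      · exact ho
      · exfalso; rw [h, h2] at hpl; exact lt_irrefl j hpl
    have hp2 : p.1.1 ≠ j → p.1.2 = j ∧ o p = false := by
      intro h; rcases hp with ⟨_, h1⟩ | ⟨ho, h2⟩
      · exact absurd h1 h
      · exact ⟨h2, ho⟩
    have hq1 : q.1.1 = j → o q = true := by
      intro h; rcases hq with ⟨ho, _⟩ | ⟨_, h2⟩
      · exact ho
      · exfalso; rw [h, h2] at hql; exact lt_irrefl j hql
    have hq2 : q.1.1 ≠ j → q.1.2 = j ∧ o q = false := by
      intro h; rcases hq with ⟨_, h1⟩ | ⟨ho, h2⟩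
      · exact absurd h1 h
      · exact ⟨h2, ho⟩
    by_cases h1 : p.1.1 = j <;> by_cases h2 : q.1.1 = j <;>
      simp only [h1, h2, eq_self_iff_true, if_true, if_false] at hpq
    · apply Subtype.ext; apply Prod.ext
      · rw [h1, h2]
      · exact hpq
    · exfalso
      obtain ⟨hq2', _⟩ := hq2 h2
      rw [← h1] at hq2'
      have : p.1.1 < q.1.2 := by rw [hpq] at hpl; exact lt_trans hpl hql
      rw [hq2'] at this; exact lt_irrefl _ this
    · exfalso
      obtain ⟨hp2', _⟩ := hp2 h1
      rw [← h2] at hp2'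
      have : q.1.1 < p.1.2 := by rw [← hpq] at hql; exact lt_trans hql hpl
      rw [hp2'] at this; exact lt_irrefl _ this
    · obtain ⟨hp2', _⟩ := hp2 h1
      obtain ⟨hq2', _⟩ := hq2 h2
      apply Subtype.ext; apply Prod.ext
      · exact hpq
      · rw [hp2', hq2']
  · intro k hk
    simp only [Finset.mem_filter, Finset.mem_univ, true_and] at hk
    have hjk : j ≠ k := by
      intro h; rw [← h] at hk; rw [beats_irrefl] at hk; exact Bool.false_ne_true hk
    rcases lt_or_gt_of_ne hjk with h | h
    · refine ⟨⟨(j, k), h⟩, ?_, ?_⟩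
      · simp only [Finset.mem_filter, Finset.mem_univ, true_and]
        left
        exact ⟨by rw [← beats_of_lt o h]; exact hk, by trivial⟩
      · simp
    · refine ⟨⟨(k, j), h⟩, ?_, ?_⟩
      · simp only [Finset.mem_filter, Finset.mem_univ, true_and]
        right
        refine ⟨?_, by trivial⟩
        rw [beats_of_gt o h] at hk
        simp only [Bool.not_eq_true'] at hk
        exact hk
      · have : k ≠ j := hjk.symm  -- need (k,j).1 ≠ j i.e. k ≠ j
        simp [this]


abbrev Tourn (n : ℕ) := Fin n → Fin n → Bool

def Valid {n : ℕ} (R : Tourn n) : Prop :=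
  (∀ a : Fin n, R a a = false) ∧ ∀ a b : Fin n, a ≠ b → R a b = !R b a

instance {n : ℕ} : DecidablePred (Valid (n := n)) := fun R => by
  unfold Valid; infer_instance

def score {n : ℕ} (R : Tourn n) (j : Fin n) : ℕ :=
  (Finset.univ.filter (fun k => R j k = true)).card

def gR {n : ℕ} (x : Fin n → ℕ) : ℕ :=
  (Finset.univ.filter (fun R : Tourn n => Valid R ∧ score R = x)).card

lemma valid_irrefl {n : ℕ} {R : Tourn n} (hR : Valid R) (a : Fin n) : R a a = false :=
  hR.1 a

lemma valid_asymm {n : ℕ} {R : Tourn n} (hR : Valid R) {a b : Fin n} (h : a ≠ b) :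
    R a b = !R b a := hR.2 a b h

lemma beats_valid {n : ℕ} (o : BTPairs n → Bool) : Valid (beats o) :=
  ⟨fun a => beats_irrefl o a, fun a b h => beats_asymm o h⟩

lemma orientationCount_eq_gR {n : ℕ} (x : Fin n → ℕ) : orientationCount x = gR x := by
  classical
  unfold orientationCount gR
  apply Finset.card_bij (fun o _ => beats o)
  · intro o ho
    simp only [Finset.mem_filter, Finset.mem_univ, true_and] at ho ⊢
    refine ⟨beats_valid o, ?_⟩
    funext j
    unfold score
    rw [← winCount_eq, ho]
  · intro o _ o' _ h
    funext p
    have := congrFun (congrFun h p.1.1) p.1.2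
    rw [beats_of_lt o p.2, beats_of_lt o' p.2] at this
    convert this <;> exact Subtype.ext rfl
  · intro R hR
    simp only [Finset.mem_filter, Finset.mem_univ, true_and] at hR
    obtain ⟨hv, hs⟩ := hR
    refine ⟨fun p => R p.1.1 p.1.2, ?_, ?_⟩
    · simp only [Finset.mem_filter, Finset.mem_univ, true_and]
      rw [← hs]
      funext j
      rw [winCount_eq]
      unfold score
      congr 1
      apply Finset.filter_congr
      intro k _
      constructor
      · intro h
        rcases lt_trichotomy j k with h' | h' | h'
        · rwa [beats_of_lt _ h'] at h
        · rw [← h', beats_irrefl] at h; exact absurd h (by simp)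
        · rw [beats_of_gt _ h'] at h
          simp only [Bool.not_eq_true'] at h
          have := hv.2 j k (by intro hc; rw [hc] at h'; exact lt_irrefl k h')
          rw [this, h]
          rfl
      · intro h
        rcases lt_trichotomy j k with h' | h' | h'
        · rwa [beats_of_lt _ h']
        · rw [← h', valid_irrefl hv] at h; exact absurd h (by simp)
        · rw [beats_of_gt _ h']
          have := hv.2 j k (by intro hc; rw [hc] at h'; exact lt_irrefl k h')
          rw [this] at h
          simp only [Bool.not_eq_true'] at h ⊢
          exact h
    · funext a b
      by_cases hab : a < b
      · rw [beats_of_lt _ hab]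
      · by_cases hba : b < a
        · rw [beats_of_gt _ hba]
          have := hv.2 a b (by intro hc; rw [hc] at hba; exact lt_irrefl b hba)
          show (!R b a) = R a b
          rw [this]
        · have : a = b := le_antisymm (not_lt.mp hba) (not_lt.mp hab)
          rw [this, beats_irrefl, valid_irrefl hv]

/-! ### Permutation invariance -/

def permR {n : ℕ} (σ : Equiv.Perm (Fin n)) (R : Tourn n) : Tourn n :=
  fun a b => R (σ a) (σ b)

lemma permR_valid {n : ℕ} (σ : Equiv.Perm (Fin n)) {R : Tourn n} (hR : Valid R) :
    Valid (permR σ R) := by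
  constructor
  · intro a; exact hR.1 (σ a)
  · intro a b h
    exact hR.2 (σ a) (σ b) (fun hc => h (σ.injective hc))

lemma score_permR {n : ℕ} (σ : Equiv.Perm (Fin n)) (R : Tourn n) (c : Fin n) :
    score (permR σ R) c = score R (σ c) := by
  unfold score permR
  apply Finset.card_bij (fun k _ => σ k)
  · intro k hk
    simp only [Finset.mem_filter, Finset.mem_univ, true_and] at hk ⊢
    exact hk
  · intro k _ k' _ h
    exact σ.injective h
  · intro k hk
    simp only [Finset.mem_filter, Finset.mem_univ, true_and] at hk
    exact ⟨σ.symm k, by simp [hk], by simp⟩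

lemma gR_perm {n : ℕ} (σ : Equiv.Perm (Fin n)) (x : Fin n → ℕ) :
    gR (fun j => x (σ j)) = gR x := by
  unfold gR
  apply Finset.card_bij (fun R _ => permR σ⁻¹ R)
  · intro R hR
    simp only [Finset.mem_filter, Finset.mem_univ, true_and] at hR ⊢
    refine ⟨permR_valid _ hR.1, ?_⟩
    funext c
    rw [score_permR]
    have := congrFun hR.2 (σ⁻¹ c)
    rw [this]
    simp
  · intro R _ R' _ h
    funext a b
    have := congrFun (congrFun h (σ a)) (σ b)
    simpa [permR] using this
  · intro R hR
    simp only [Finset.mem_filter, Finset.mem_univ, true_and] at hR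
    refine ⟨permR σ R, ?_, ?_⟩
    · simp only [Finset.mem_filter, Finset.mem_univ, true_and]
      refine ⟨permR_valid _ hR.1, ?_⟩
      funext c
      rw [score_permR, congrFun hR.2 (σ c)]
    · funext a b
      simp [permR]

/-! ### Edge flips -/

def flipE {n : ℕ} (a b : Fin n) (R : Tourn n) : Tourn n :=
  fun c d => if (c = a ∧ d = b) ∨ (c = b ∧ d = a) then !R c d else R c d

lemma flipE_comm {n : ℕ} (a b : Fin n) (R : Tourn n) : flipE a b R = flipE b a R := by
  funext c d
  unfold flipE
  by_cases h : (c = a ∧ d = b) ∨ (c = b ∧ d = a)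
  · rw [if_pos h, if_pos (by tauto)]
  · rw [if_neg h, if_neg (by tauto)]

lemma flipE_flipE {n : ℕ} (a b : Fin n) (R : Tourn n) : flipE a b (flipE a b R) = R := by
  funext c d
  unfold flipE
  by_cases h : (c = a ∧ d = b) ∨ (c = b ∧ d = a) <;> simp [h]

lemma flipE_ab {n : ℕ} (a b : Fin n) (R : Tourn n) : flipE a b R a b = !R a b := by
  unfold flipE; simp

lemma flipE_ba {n : ℕ} (a b : Fin n) (R : Tourn n) : flipE a b R b a = !R b a := by
  unfold flipE; simp

lemma flipE_other {n : ℕ} {a b c d : Fin n} (R : Tourn n)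
    (h : ¬((c = a ∧ d = b) ∨ (c = b ∧ d = a))) : flipE a b R c d = R c d := by
  unfold flipE; rw [if_neg h]

lemma flipE_valid {n : ℕ} {a b : Fin n} (hab : a ≠ b) {R : Tourn n} (hR : Valid R) :
    Valid (flipE a b R) := by
  constructor
  · intro c
    rw [flipE_other]
    · exact hR.1 c
    · rintro (⟨h1, h2⟩ | ⟨h1, h2⟩) <;> exact hab (by rw [← h1, ← h2])
  · intro c d h
    unfold flipE
    by_cases hc : (c = a ∧ d = b) ∨ (c = b ∧ d = a)
    · have hc' : (d = a ∧ c = b) ∨ (d = b ∧ c = a) := by tauto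
      rw [if_pos hc, if_pos hc', hR.2 c d h]
    · have hc' : ¬((d = a ∧ c = b) ∨ (d = b ∧ c = a)) := by tauto
      rw [if_neg hc, if_neg hc', hR.2 c d h]

/-- scores after flipping an edge in which `a` beats `b`. -/
lemma score_flipE {n : ℕ} {a b : Fin n} (hab : a ≠ b) {R : Tourn n} (hR : Valid R)
    (h : R a b = true) :
    score (flipE a b R) a + 1 = score R a ∧
    score (flipE a b R) b = score R b + 1 ∧
    ∀ c, c ≠ a → c ≠ b → score (flipE a b R) c = score R c := by
  refine ⟨?_, ?_, ?_⟩
  · unfold score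
    have hset : Finset.univ.filter (fun k => flipE a b R a k = true)
        = (Finset.univ.filter (fun k => R a k = true)).erase b := by
      ext k
      simp only [Finset.mem_filter, Finset.mem_univ, true_and, Finset.mem_erase]
      by_cases hk : k = b
      · subst hk
        rw [flipE_ab]
        simp [h]
      · rw [flipE_other R (by tauto)]
        tauto
    rw [hset, Finset.card_erase_of_mem (by simp [h])]
    have : 0 < (Finset.univ.filter (fun k => R a k = true)).card :=
      Finset.card_pos.mpr ⟨b, by simp [h]⟩
    omega
  · unfold score
    have hba : R b a = false := by
      rw [hR.2 b a (Ne.symm hab), h]; rfl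
    have hset : Finset.univ.filter (fun k => flipE a b R b k = true)
        = insert a (Finset.univ.filter (fun k => R b k = true)) := by
      ext k
      simp only [Finset.mem_filter, Finset.mem_univ, true_and, Finset.mem_insert]
      by_cases hk : k = a
      · subst hk
        rw [flipE_ba]
        simp [hba]
      · rw [flipE_other R (by tauto)]
        tauto
    rw [hset, Finset.card_insert_of_notMem (by simp [hba])]
  · intro c hca hcb
    unfold score
    congr 1
    apply Finset.filter_congr
    intro k _
    rw [flipE_other R (by tauto)]

/-! ### Move sets -/

def Mset {n : ℕ} (i j : Fin n) (R : Tourn n) : Finset (Fin n) :=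
  Finset.univ.filter (fun k =>
    (k = j ∧ R i j = true) ∨ (k ≠ i ∧ k ≠ j ∧ R i k = true ∧ R k j = true))

def Dset {n : ℕ} (i j : Fin n) (R : Tourn n) : Finset (Fin n) :=
  Finset.univ.filter (fun k => k ≠ i ∧ k ≠ j ∧ R i k = true ∧ R j k = true)

lemma Dset_symm {n : ℕ} (i j : Fin n) (R : Tourn n) : Dset i j R = Dset j i R := by
  unfold Dset
  apply Finset.filter_congr
  intro k _
  tauto

lemma score_eq_M_add_D {n : ℕ} {i j : Fin n} (hij : i ≠ j) {R : Tourn n} (hR : Valid R) :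
    score R i = (Mset i j R).card + (Dset i j R).card := by
  unfold score
  rw [← Finset.card_union_of_disjoint]
  · congr 1
    ext k
    simp only [Mset, Dset, Finset.mem_filter, Finset.mem_univ, true_and, Finset.mem_union]
    constructor
    · intro h
      have hki : k ≠ i := by
        intro hc; rw [hc, hR.1 i] at h; exact Bool.false_ne_true h
      by_cases hkj : k = j
      · left; left; exact ⟨hkj, by rwa [hkj] at h⟩
      · by_cases hkj2 : R k j = true
        · left; right; exact ⟨hki, hkj, h, hkj2⟩
        · right
          refine ⟨hki, hkj, h, ?_⟩
          have := hR.2 j k (fun hc => hkj (hc.symm))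
          rw [this]
          simp only [Bool.not_eq_true'] at hkj2 ⊢
          simp [hkj2]
    · rintro ((⟨h1, h2⟩ | ⟨_, _, h3, _⟩) | ⟨_, _, h3, _⟩)
      · rw [h1]; exact h2
      · exact h3
      · exact h3
  · rw [Finset.disjoint_left]
    intro k hkM hkD
    simp only [Mset, Dset, Finset.mem_filter, Finset.mem_univ, true_and] at hkM hkD
    obtain ⟨_, hkj, _, hjk⟩ := hkD
    rcases hkM with ⟨h1, _⟩ | ⟨_, _, _, hkj2⟩
    · exact hkj h1
    · have := hR.2 k j hkj
      rw [hkj2, hjk] at this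
      exact absurd this (by decide)

/-! ### Moves -/

def flipM {n : ℕ} (i j k : Fin n) (R : Tourn n) : Tourn n :=
  if k = j ∨ k = i then flipE i j R else flipE i k (flipE k j R)

lemma move_lemma {n : ℕ} {i j k : Fin n} (hij : i ≠ j) {R : Tourn n} (hR : Valid R)
    (hk : k ∈ Mset i j R) :
    Valid (flipM i j k R) ∧
    score (flipM i j k R) i + 1 = score R i ∧
    score (flipM i j k R) j = score R j + 1 ∧
    (∀ c, c ≠ i → c ≠ j → score (flipM i j k R) c = score R c) ∧
    Dset i j (flipM i j k R) = Dset i j R ∧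
    (if k = j then i else k) ∈ Mset j i (flipM i j k R) ∧
    flipM j i (if k = j then i else k) (flipM i j k R) = R := by
  simp only [Mset, Finset.mem_filter, Finset.mem_univ, true_and] at hk
  rcases hk with ⟨hkj, hRij⟩ | ⟨hki, hkj, hRik, hRkj⟩
  · -- edge move: k = j
    subst hkj
    have hform : flipM i k k R = flipE i k R := by unfold flipM; simp
    have hRji : R k i = false := by
      rw [hR.2 k i (Ne.symm hij), hRij]; rfl
    obtain ⟨s1, s2, s3⟩ := score_flipE hij hR hRij
    rw [hform]
    refine ⟨flipE_valid hij hR, s1, s2, s3, ?_, ?_, ?_⟩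
    · ext t
      simp only [Dset, Finset.mem_filter, Finset.mem_univ, true_and]
      by_cases h1 : t = i
      · simp [h1]
      · by_cases h2 : t = k
        · simp [h2]
        · rw [flipE_other R (by tauto), flipE_other R (by tauto)]
    · simp only [if_pos rfl, Mset, Finset.mem_filter, Finset.mem_univ, true_and]
      left
      refine ⟨rfl, ?_⟩
      rw [flipE_ba, hRji]
      rfl
    · have : flipM k i (if k = k then i else k) (flipE i k R) = flipE k i (flipE i k R) := by
        unfold flipM; simp
      rw [this, flipE_comm k i, flipE_flipE]
  · -- path move: k ∉ {i, j}
    have hik : i ≠ k := Ne.symm hki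
    have hjk : j ≠ k := Ne.symm hkj
    have hform : flipM i j k R = flipE i k (flipE k j R) := by
      unfold flipM
      rw [if_neg (by tauto)]
    set R1 := flipE k j R with hR1
    have hvR1 : Valid R1 := flipE_valid hkj hR
    have hR1ik : R1 i k = true := by
      rw [hR1, flipE_other R (by tauto)]; exact hRik
    obtain ⟨s1a, s1b, s1c⟩ := score_flipE hkj hR hRkj
    obtain ⟨s2a, s2b, s2c⟩ := score_flipE hik hvR1 hR1ik
    rw [hform]
    have hRjk : R j k = false := by
      rw [hR.2 j k hjk, hRkj]; rfl
    have hRki : R k i = false := by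
      rw [hR.2 k i hki, hRik]; rfl
    refine ⟨flipE_valid hik hvR1, ?_, ?_, ?_, ?_, ?_, ?_⟩
    · rw [s2a, s1c i hik hij]
    · rw [s2c j hij.symm hjk, s1b]
    · intro c hci hcj
      by_cases hck : c = k
      · subst hck
        rw [s2b, s1a]
      · rw [s2c c hci hck, s1c c hck hcj]
    · ext t
      simp only [Dset, Finset.mem_filter, Finset.mem_univ, true_and]
      by_cases h1 : t = i
      · simp [h1]
      · by_cases h2 : t = j
        · simp [h2]
        · by_cases h3 : t = k
          · have hL : flipE i k R1 i k = false := by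
              rw [flipE_ab, hR1ik]
              rfl
            simp [h3, hL, hRjk]
          · rw [flipE_other R1 (by tauto), flipE_other R1 (by tauto),
              hR1, flipE_other R (by tauto), flipE_other R (by tauto)]
    · rw [if_neg hkj]
      simp only [Mset, Finset.mem_filter, Finset.mem_univ, true_and]
      right
      refine ⟨hkj, hki, ?_, ?_⟩
      · rw [flipE_other R1 (by tauto), hR1]
        unfold flipE
        rw [if_pos (by tauto)]
        rw [hRjk]
        rfl
      · unfold flipE
        rw [if_pos (by tauto)]
        rw [hR1, flipE_other R (by tauto), hRki]
        rfl
    · rw [if_neg hkj]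
      have : flipM j i k (flipE i k R1) = flipE j k (flipE k i (flipE i k R1)) := by
        unfold flipM
        rw [if_neg (by tauto)]
      rw [this, flipE_comm k i, flipE_flipE, hR1, flipE_comm j k, flipE_flipE]

lemma mem_Mset_ne {n : ℕ} {i j k : Fin n} (hij : i ≠ j) {R : Tourn n}
    (hk : k ∈ Mset i j R) : k ≠ i := by
  simp only [Mset, Finset.mem_filter, Finset.mem_univ, true_and] at hk
  rcases hk with ⟨h1, _⟩ | ⟨h1, _⟩
  · rw [h1]; exact Ne.symm hij
  · exact h1

/-- The transfer (Robin Hood) inequality. -/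
lemma gR_transfer {n : ℕ} {i j : Fin n} (hij : i ≠ j) (x : Fin n → ℕ)
    (h2 : x j + 2 ≤ x i) :
    gR x ≤ gR (Function.update (Function.update x i (x i - 1)) j (x j + 1)) := by
  classical
  set x' := Function.update (Function.update x i (x i - 1)) j (x j + 1) with hx'
  have hx'i : x' i = x i - 1 := by
    rw [hx', Function.update_apply, if_neg hij, Function.update_self]
  have hx'j : x' j = x j + 1 := by
    rw [hx', Function.update_self]
  have hx'c : ∀ c, c ≠ i → c ≠ j → x' c = x c := by
    intro c h1 h0
    rw [hx', Function.update_apply, if_neg h0, Function.update_apply, if_neg h1]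
  unfold gR
  set A := Finset.univ.filter (fun R : Tourn n => Valid R ∧ score R = x) with hA
  set B := Finset.univ.filter (fun R : Tourn n => Valid R ∧ score R = x') with hB
  have hfibA : ∀ R ∈ A, (Dset i j R).card ∈ Finset.range (n + 1) := by
    intro R _
    rw [Finset.mem_range]
    have := Finset.card_le_univ (Dset i j R)
    simp only [Finset.card_univ, Fintype.card_fin] at this
    omega
  have hfibB : ∀ R ∈ B, (Dset i j R).card ∈ Finset.range (n + 1) := by
    intro R _
    rw [Finset.mem_range]
    have := Finset.card_le_univ (Dset i j R)
    simp only [Finset.card_univ, Fintype.card_fin] at this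
    omega
  rw [Finset.card_eq_sum_card_fiberwise hfibA, Finset.card_eq_sum_card_fiberwise hfibB]
  apply Finset.sum_le_sum
  intro d _
  set Ad := A.filter (fun R => (Dset i j R).card = d) with hAd
  set Bd := B.filter (fun R => (Dset i j R).card = d) with hBd
  rcases Ad.eq_empty_or_nonempty with he | ⟨R₀, hR₀⟩
  · rw [he]; simp
  -- facts from the witness R₀
  have hmemA : ∀ R, R ∈ Ad → Valid R ∧ score R = x ∧ (Dset i j R).card = d := by
    intro R hR
    rw [hAd, Finset.mem_filter, hA, Finset.mem_filter] at hR
    exact ⟨hR.1.2.1, hR.1.2.2, hR.2⟩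
  have hmemB : ∀ R, R ∈ Bd → Valid R ∧ score R = x' ∧ (Dset i j R).card = d := by
    intro R hR
    rw [hBd, Finset.mem_filter, hB, Finset.mem_filter] at hR
    exact ⟨hR.1.2.1, hR.1.2.2, hR.2⟩
  obtain ⟨hv₀, hs₀, hd₀⟩ := hmemA R₀ hR₀
  have hdj : d ≤ x j := by
    have h := score_eq_M_add_D (Ne.symm hij) hv₀
    rw [Dset_symm j i R₀, hs₀, hd₀] at h
    omega
  -- cardinality of M-sets on each side
  have hMA : ∀ R ∈ Ad, (Mset i j R).card = x i - d := by
    intro R hR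
    obtain ⟨hv, hs, hd⟩ := hmemA R hR
    have h := score_eq_M_add_D hij hv
    rw [hs, hd] at h
    omega
  have hMB : ∀ R ∈ Bd, (Mset j i R).card = x j + 1 - d := by
    intro R hR
    obtain ⟨hv, hs, hd⟩ := hmemB R hR
    have h := score_eq_M_add_D (Ne.symm hij) hv
    rw [hs, ← Dset_symm i j R, hd, hx'j] at h
    omega
  -- the double count
  have key : Ad.card * (x i - d) = Bd.card * (x j + 1 - d) := by
    have hsig : (Ad.sigma (fun R => Mset i j R)).card
        = (Bd.sigma (fun R => Mset j i R)).card := by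
      apply Finset.card_bij'
        (i := fun p _ => (⟨flipM i j p.2 p.1, if p.2 = j then i else p.2⟩ :
          (_ : Tourn n) × Fin n))
        (j := fun p _ => (⟨flipM j i p.2 p.1, if p.2 = i then j else p.2⟩ :
          (_ : Tourn n) × Fin n))
      · -- forward membership
        rintro ⟨R, k⟩ hp
        rw [Finset.mem_sigma] at hp ⊢
        dsimp only at hp ⊢
        obtain ⟨hRA, hkM⟩ := hp
        obtain ⟨hv, hs, hd⟩ := hmemA R hRA
        obtain ⟨mv, msi, msj, msc, mD, mM, _⟩ := move_lemma hij hv hkM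
        constructor
        · rw [hBd, Finset.mem_filter, hB, Finset.mem_filter]
          refine ⟨⟨Finset.mem_univ _, mv, ?_⟩, ?_⟩
          · funext c
            by_cases hc : c = i
            · subst hc
              rw [hs] at msi
              rw [hx'i]
              omega
            · by_cases hc' : c = j
              · subst hc'
                rw [msj, hx'j, hs]
              · rw [msc c hc hc', hx'c c hc hc', hs]
          · rw [mD, hd]
        · exact mM
      · -- backward membership
        rintro ⟨R, k⟩ hp
        rw [Finset.mem_sigma] at hp ⊢
        dsimp only at hp ⊢
        obtain ⟨hRB, hkM⟩ := hp
        obtain ⟨hv, hs, hd⟩ := hmemB R hRB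
        obtain ⟨mv, msi, msj, msc, mD, mM, _⟩ := move_lemma (Ne.symm hij) hv hkM
        constructor
        · rw [hAd, Finset.mem_filter, hA, Finset.mem_filter]
          refine ⟨⟨Finset.mem_univ _, mv, ?_⟩, ?_⟩
          · funext c
            by_cases hc : c = j
            · subst hc
              rw [hs] at msi
              rw [hx'j] at msi
              omega
            · by_cases hc' : c = i
              · subst hc'
                rw [msj, hs, hx'i]
                omega
              · rw [msc c hc hc', hs, hx'c c hc' hc]
          · rw [Dset_symm i j, mD, ← Dset_symm i j, hd]
        · exact mM
      · -- left inverse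
        rintro ⟨R, k⟩ hp
        rw [Finset.mem_sigma] at hp
        obtain ⟨hRA, hkM⟩ := hp
        obtain ⟨hv, hs, hd⟩ := hmemA R hRA
        obtain ⟨_, _, _, _, _, _, minv⟩ := move_lemma hij hv hkM
        have hki : k ≠ i := mem_Mset_ne hij hkM
        have hmarker : (if (if k = j then i else k) = i then j else
            (if k = j then i else k)) = k := by
          by_cases hkj : k = j
          · simp [hkj]
          · simp [hkj, hki]
        dsimp only
        rw [hmarker, minv]
      · -- right inverse
        rintro ⟨R, k⟩ hp
        rw [Finset.mem_sigma] at hp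
        obtain ⟨hRB, hkM⟩ := hp
        obtain ⟨hv, hs, hd⟩ := hmemB R hRB
        obtain ⟨_, _, _, _, _, _, minv⟩ := move_lemma (Ne.symm hij) hv hkM
        have hkj : k ≠ j := mem_Mset_ne (Ne.symm hij) hkM
        have hmarker : (if (if k = i then j else k) = j then i else
            (if k = i then j else k)) = k := by
          by_cases hki : k = i
          · simp [hki]
          · simp [hki, hkj]
        dsimp only
        rw [hmarker, minv]
    rw [Finset.card_sigma, Finset.card_sigma] at hsig
    rw [Finset.sum_congr rfl hMA, Finset.sum_congr rfl hMB] at hsig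
    simpa [mul_comm] using hsig
  -- conclude
  have ht : 0 < x i - d := by omega
  have hu : x j + 1 - d ≤ x i - d := by omega
  have : Ad.card * (x i - d) ≤ Bd.card * (x i - d) := by
    calc Ad.card * (x i - d) = Bd.card * (x j + 1 - d) := key
    _ ≤ Bd.card * (x i - d) := Nat.mul_le_mul_left _ hu
  exact Nat.le_of_mul_le_mul_right (by simpa [mul_comm] using this) ht

/-! ### Prefix sums and the chain of transfers -/

def pSum {n : ℕ} (z : Fin n → ℕ) (k : ℕ) : ℕ :=
  ∑ j ∈ Finset.univ.filter (fun j : Fin n => (j : ℕ) < k), z j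

lemma pSum_succ {n : ℕ} (z : Fin n → ℕ) (j : Fin n) :
    pSum z ((j : ℕ) + 1) = pSum z (j : ℕ) + z j := by
  unfold pSum
  rw [add_comm (∑ t ∈ Finset.univ.filter (fun t : Fin n => (t : ℕ) < (j : ℕ)), z t) (z j),
    ← Finset.sum_insert (by simp)]
  congr 1
  ext t
  simp only [Finset.mem_insert, Finset.mem_filter, Finset.mem_univ, true_and]
  constructor
  · intro h
    rcases Nat.lt_succ_iff_lt_or_eq.mp h with h | h
    · right; exact h
    · left; exact Fin.ext h
  · rintro (h | h)
    · rw [h]; omega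
    · omega

lemma pSum_univ {n : ℕ} (z : Fin n → ℕ) : pSum z n = ∑ j, z j := by
  unfold pSum
  congr 1
  apply Finset.filter_true_of_mem
  intro j _
  exact j.isLt

lemma gR_chain {n : ℕ} (N : ℕ) : ∀ (x y : Fin n → ℕ),
    (∑ k ∈ Finset.range (n + 1), (pSum x k - pSum y k)) ≤ N →
    (∀ a b : Fin n, a ≤ b → x b ≤ x a) →
    (∀ a b : Fin n, a ≤ b → y b ≤ y a) →
    (∀ k, k ≤ n → pSum y k ≤ pSum x k) →
    pSum x n = pSum y n →
    gR x ≤ gR y := by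
  induction N with
  | zero =>
    intro x y hm hx hy hdom hsum
    have hz : ∀ k ∈ Finset.range (n + 1), pSum x k - pSum y k = 0 :=
      Finset.sum_eq_zero_iff.mp (Nat.le_zero.mp hm)
    have heq : ∀ k, k ≤ n → pSum x k = pSum y k := by
      intro k hk
      have h1 := hz k (Finset.mem_range.mpr (by omega))
      have h2 := hdom k hk
      omega
    have : x = y := by
      funext j
      have h1 := heq (j : ℕ) (by omega)
      have h2 := heq ((j : ℕ) + 1) (by omega)
      have h3 := pSum_succ x j
      have h4 := pSum_succ y j
      omega
    rw [this]
  | succ N ih =>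
    intro x y hm hx hy hdom hsum
    by_cases heq : x = y
    · rw [heq]
    -- find the smallest disagreement i and the smallest overshoot j0
    have hS : (Finset.univ.filter (fun t : Fin n => x t ≠ y t)).Nonempty := by
      rw [Finset.filter_nonempty_iff]
      by_contra hc
      push_neg at hc
      exact heq (funext fun t => hc t (Finset.mem_univ t))
    set i := (Finset.univ.filter (fun t : Fin n => x t ≠ y t)).min' hS with hi
    have hi_mem : x i ≠ y i := by
      have := Finset.min'_mem _ hS
      rw [Finset.mem_filter] at this
      exact this.2
    have hi_min : ∀ t, t < i → x t = y t := by
      intro t ht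
      by_contra hc
      have : i ≤ t := Finset.min'_le _ _ (by simp [hc])
      omega
    have hsum' : ∑ t, x t = ∑ t, y t := by
      rw [← pSum_univ, ← pSum_univ, hsum]
    have hT : (Finset.univ.filter (fun t : Fin n => x t < y t)).Nonempty := by
      rw [Finset.filter_nonempty_iff]
      by_contra hc
      push_neg at hc
      apply heq
      funext t
      have hle : ∀ t ∈ Finset.univ, y t ≤ x t := fun t _ => hc t (Finset.mem_univ t)
      have := (Finset.sum_eq_sum_iff_of_le hle).mp hsum'.symm
      exact ((this t (Finset.mem_univ t)).symm)
    set j0 := (Finset.univ.filter (fun t : Fin n => x t < y t)).min' hT with hj0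
    have hj0_mem : x j0 < y j0 := by
      have := Finset.min'_mem _ hT
      rw [Finset.mem_filter] at this
      exact this.2
    have hj0_min : ∀ t, t < j0 → y t ≤ x t := by
      intro t ht
      by_contra hc
      have : j0 ≤ t := Finset.min'_le _ _ (by simp; omega)
      omega
    -- prefix sums below i agree
    have hpre_i : pSum x (i : ℕ) = pSum y (i : ℕ) := by
      unfold pSum
      apply Finset.sum_congr rfl
      intro t ht
      rw [Finset.mem_filter] at ht
      exact hi_min t (by exact ht.2)
    have hxiyi : y i < x i := by
      have h1 := hdom ((i : ℕ) + 1) (by omega)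
      have h2 := pSum_succ x i
      have h3 := pSum_succ y i
      rcases Nat.lt_or_ge (y i) (x i) with h | h
      · exact h
      · exfalso
        have : x i = y i := by omega
        exact hi_mem this
    have hij0 : i < j0 := by
      have h1 : i ≤ j0 := Finset.min'_le _ _ (by simp; omega)
      rcases lt_or_eq_of_le h1 with h | h
      · exact h
      · exfalso; rw [h] at hxiyi; omega
    -- block edges
    have hSi : (Finset.univ.filter (fun t : Fin n => x t = x i)).Nonempty :=
      ⟨i, by simp⟩
    set i' := (Finset.univ.filter (fun t : Fin n => x t = x i)).max' hSi with hi'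
    have hi'_val : x i' = x i := by
      have := Finset.max'_mem _ hSi
      rw [Finset.mem_filter] at this
      exact this.2
    have hii' : i ≤ i' := Finset.le_max' _ _ (by simp)
    have hblock_i : ∀ t, i' < t → x t < x i := by
      intro t ht
      rcases Nat.lt_or_ge (x t) (x i) with h | h
      · exact h
      · exfalso
        have h1 : x t ≤ x i' := hx i' t (le_of_lt ht)
        have h2 : x t = x i := by omega
        have : t ≤ i' := Finset.le_max' _ _ (by simp [h2])
        omega
    have hSj : (Finset.univ.filter (fun t : Fin n => x t = x j0)).Nonempty :=
      ⟨j0, by simp⟩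
    set j' := (Finset.univ.filter (fun t : Fin n => x t = x j0)).min' hSj with hj'
    have hj'_val : x j' = x j0 := by
      have := Finset.min'_mem _ hSj
      rw [Finset.mem_filter] at this
      exact this.2
    have hj'j0 : j' ≤ j0 := Finset.min'_le _ _ (by simp)
    have hblock_j : ∀ t, t < j' → x j0 < x t := by
      intro t ht
      rcases Nat.lt_or_ge (x j0) (x t) with h | h
      · exact h
      · exfalso
        have h1 : x j0 ≤ x t := by
          have := hx t j0 (le_of_lt (lt_of_lt_of_le ht hj'j0))
          exact this
        have h2 : x t = x j0 := by omega
        have : j' ≤ t := Finset.min'_le _ _ (by simp [h2])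
        omega
    -- the crucial gap
    have hgap : x j0 + 2 ≤ x i := by
      have h1 : y j0 ≤ y i := hy i j0 (le_of_lt hij0)
      omega
    have hi'j' : i' < j' := by
      rcases Nat.lt_or_ge (i' : ℕ) (j' : ℕ) with h | h
      · exact h
      · exfalso
        have : x i' ≤ x j' := hx j' i' h
        omega
    have hne : i' ≠ j' := Fin.ne_of_lt hi'j'
    -- the transferred vector
    set x' := Function.update (Function.update x i' (x i' - 1)) j' (x j' + 1) with hx'
    have hx'i : x' i' = x i' - 1 := by
      rw [hx', Function.update_apply, if_neg hne, Function.update_self]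
    have hx'j : x' j' = x j' + 1 := by
      rw [hx', Function.update_self]
    have hx'c : ∀ c, c ≠ i' → c ≠ j' → x' c = x c := by
      intro c h1 h0
      rw [hx', Function.update_apply, if_neg h0, Function.update_apply, if_neg h1]
    -- prefix sums of x'
    have hps : ∀ k : ℕ,
        pSum x' k + (if (i' : ℕ) < k then 1 else 0)
          = pSum x k + (if (j' : ℕ) < k then 1 else 0) := by
      intro k
      set F := Finset.univ.filter (fun t : Fin n => (t : ℕ) < k) with hF
      have hu : pSum x' k = ∑ t ∈ F, x' t := rfl
      have hv : pSum x k = ∑ t ∈ F, x t := rfl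
      by_cases hik : (i' : ℕ) < k
      · have hi'F : i' ∈ F := by simp [hF, hik]
        by_cases hjk : (j' : ℕ) < k
        · rw [if_pos hik, if_pos hjk]
          have hj'F : j' ∈ F.erase i' := by
            simp [hF, hjk, Ne.symm hne]
          have e1 : ∑ t ∈ F, x' t = x' i' + ∑ t ∈ F.erase i', x' t :=
            (Finset.add_sum_erase F x' hi'F).symm
          have e2 : ∑ t ∈ F, x t = x i' + ∑ t ∈ F.erase i', x t :=
            (Finset.add_sum_erase F x hi'F).symm
          have e3 : ∑ t ∈ F.erase i', x' t = x' j' + ∑ t ∈ (F.erase i').erase j', x' t :=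
            (Finset.add_sum_erase _ x' hj'F).symm
          have e4 : ∑ t ∈ F.erase i', x t = x j' + ∑ t ∈ (F.erase i').erase j', x t :=
            (Finset.add_sum_erase _ x hj'F).symm
          have e5 : ∑ t ∈ (F.erase i').erase j', x' t = ∑ t ∈ (F.erase i').erase j', x t := by
            apply Finset.sum_congr rfl
            intro t ht
            rw [Finset.mem_erase, Finset.mem_erase] at ht
            exact hx'c t ht.2.1 ht.1
          have hpos : 1 ≤ x i' := by omega
          rw [hu, hv, e1, e2, e3, e4, e5, hx'i, hx'j]
          omega
        · rw [if_pos hik, if_neg hjk]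
          have e1 : ∑ t ∈ F, x' t = x' i' + ∑ t ∈ F.erase i', x' t :=
            (Finset.add_sum_erase F x' hi'F).symm
          have e2 : ∑ t ∈ F, x t = x i' + ∑ t ∈ F.erase i', x t :=
            (Finset.add_sum_erase F x hi'F).symm
          have e5 : ∑ t ∈ F.erase i', x' t = ∑ t ∈ F.erase i', x t := by
            apply Finset.sum_congr rfl
            intro t ht
            rw [Finset.mem_erase] at ht
            refine hx'c t ht.1 ?_
            intro hc
            have := ht.2
            rw [hF, Finset.mem_filter] at this
            rw [hc] at this
            exact hjk this.2
          have hpos : 1 ≤ x i' := by omega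
          rw [hu, hv, e1, e2, e5, hx'i]
          omega
      · have hjk : ¬ (j' : ℕ) < k := by omega
        rw [if_neg hik, if_neg hjk]
        have e5 : ∑ t ∈ F, x' t = ∑ t ∈ F, x t := by
          apply Finset.sum_congr rfl
          intro t ht
          rw [hF, Finset.mem_filter] at ht
          apply hx'c
          · intro hc; rw [hc] at ht; omega
          · intro hc; rw [hc] at ht; omega
        rw [hu, hv, e5]
    have hx'le : ∀ k : ℕ, pSum x' k ≤ pSum x k := by
      intro k
      have := hps k
      by_cases hik : (i' : ℕ) < k <;> by_cases hjk : (j' : ℕ) < k <;>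
        simp [hik, hjk] at this <;> omega
    -- strict domination inside the window
    have hstrict : ∀ k : ℕ, (i' : ℕ) < k → k ≤ (j' : ℕ) → pSum y k + 1 ≤ pSum x k := by
      intro k h1 h2
      unfold pSum
      have : ∑ t ∈ Finset.univ.filter (fun t : Fin n => (t : ℕ) < k), y t
          < ∑ t ∈ Finset.univ.filter (fun t : Fin n => (t : ℕ) < k), x t := by
        apply Finset.sum_lt_sum
        · intro t ht
          rw [Finset.mem_filter] at ht
          have htj0 : t < j0 := by
            have : (t : ℕ) < (j' : ℕ) := by omega
            omega
          exact hj0_min t htj0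
        · refine ⟨i, ?_, by omega⟩
          rw [Finset.mem_filter]
          exact ⟨Finset.mem_univ _, by omega⟩
      omega
    -- x' is antitone
    have hx'anti : ∀ a b : Fin n, a ≤ b → x' b ≤ x' a := by
      intro a b hab
      rcases eq_or_lt_of_le hab with h | h
      · rw [h]
      · by_cases hai : a = i'
        · subst hai
          by_cases hbj : b = j'
          · subst hbj
            rw [hx'i, hx'j]
            omega
          · have hbi : b ≠ i' := Fin.ne_of_gt h
            rw [hx'c b hbi hbj, hx'i]
            have := hblock_i b h
            omega
        · by_cases haj : a = j'
          · subst haj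
            have hbj : b ≠ j' := Fin.ne_of_gt h
            have hbi : b ≠ i' := by
              intro hc; subst hc; omega
            rw [hx'c b hbi hbj, hx'j]
            have : x b ≤ x j' := hx j' b (le_of_lt h)
            have hblk := hblock_i b (lt_trans hi'j' h)
            -- need x b ≤ x j' and then show x b ≤ x j' + 1? no: x' b = x b ≤ x j' + 1
            omega
          · rw [hx'c a hai haj]
            by_cases hbi : b = i'
            · subst hbi
              rw [hx'i]
              have : x i' ≤ x a := hx a i' (le_of_lt h)
              omega
            · by_cases hbj : b = j'
              · subst hbj
                rw [hx'j]
                have := hblock_j a h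
                omega
              · rw [hx'c b hbi hbj]
                exact hx a b (le_of_lt h)
    -- new measure is smaller
    have hmeas : (∑ k ∈ Finset.range (n + 1), (pSum x' k - pSum y k)) ≤ N := by
      have hlt : (∑ k ∈ Finset.range (n + 1), (pSum x' k - pSum y k))
          < ∑ k ∈ Finset.range (n + 1), (pSum x k - pSum y k) := by
        apply Finset.sum_lt_sum
        · intro k _
          have := hx'le k
          omega
        · refine ⟨(i' : ℕ) + 1, Finset.mem_range.mpr (by omega), ?_⟩
          have h1 : (i' : ℕ) < (i' : ℕ) + 1 := by omega
          have h2 : (i' : ℕ) + 1 ≤ (j' : ℕ) := by omega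
          have h3 := hps ((i' : ℕ) + 1)
          rw [if_pos h1, if_neg (by omega)] at h3
          have h4 := hstrict ((i' : ℕ) + 1) h1 h2
          omega
      omega
    -- new domination
    have hdom' : ∀ k, k ≤ n → pSum y k ≤ pSum x' k := by
      intro k hk
      by_cases hik : (i' : ℕ) < k
      · by_cases hjk : k ≤ (j' : ℕ)
        · have h3 := hps k
          rw [if_pos hik, if_neg (by omega)] at h3
          have h4 := hstrict k hik hjk
          omega
        · have h3 := hps k
          rw [if_pos hik, if_pos (by omega)] at h3
          have := hdom k hk
          omega
      · have h3 := hps k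
        rw [if_neg hik, if_neg (by omega)] at h3
        have := hdom k hk
        omega
    -- new total sum
    have hsum'' : pSum x' n = pSum y n := by
      have h3 := hps n
      rw [if_pos (by omega), if_pos (by omega)] at h3
      omega
    -- combine
    have step : gR x ≤ gR x' := by
      rw [hx']
      exact gR_transfer hne x (by omega)
    exact le_trans step (ih x' y hmeas hx'anti hy hdom' hsum'')

/-- The tournament-counting carrier is Schur-concave: if `x` majorizes `y` (as integer
vectors with equal sums), then `g x ≤ g y`. -/
theorem orientationCount_schurConcave {n : ℕ} (x y : Fin n → ℕ)
    (hmaj : Majorizes (fun j => (x j : ℝ)) (fun j => (y j : ℝ))) :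
    orientationCount x ≤ orientationCount y := by
  obtain ⟨hpre, hsum⟩ := hmaj
  set σ := Tuple.sort (fun i => -((x i : ℝ))) with hσ
  set τ := Tuple.sort (fun i => -((y i : ℝ))) with hτ
  set sx : Fin n → ℕ := fun j => x (σ j) with hsx
  set sy : Fin n → ℕ := fun j => y (τ j) with hsy
  have hxa : ∀ a b : Fin n, a ≤ b → sx b ≤ sx a := by
    intro a b hab
    have h := Tuple.monotone_sort (fun i => -((x i : ℝ))) hab
    have h2 : ((x (σ b)) : ℝ) ≤ ((x (σ a)) : ℝ) := by
      simp only [Function.comp_apply] at h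
      linarith
    rw [hsx]
    exact_mod_cast h2
  have hya : ∀ a b : Fin n, a ≤ b → sy b ≤ sy a := by
    intro a b hab
    have h := Tuple.monotone_sort (fun i => -((y i : ℝ))) hab
    have h2 : ((y (τ b)) : ℝ) ≤ ((y (τ a)) : ℝ) := by
      simp only [Function.comp_apply] at h
      linarith
    rw [hsy]
    exact_mod_cast h2
  have hsum_nat : ∑ j, x j = ∑ j, y j := by
    have : ((∑ j, x j : ℕ) : ℝ) = ((∑ j, y j : ℕ) : ℝ) := by
      push_cast
      exact hsum
    exact_mod_cast this
  have hsx_tot : ∑ j, sx j = ∑ j, x j := Equiv.sum_comp σ x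
  have hsy_tot : ∑ j, sy j = ∑ j, y j := Equiv.sum_comp τ y
  have hsumP : pSum sx n = pSum sy n := by
    rw [pSum_univ, pSum_univ, hsx_tot, hsy_tot]
    exact hsum_nat
  have hdom : ∀ k, k ≤ n → pSum sy k ≤ pSum sx k := by
    intro k hk
    rcases lt_or_eq_of_le hk with hk' | hk'
    · have h := hpre k hk'
      unfold decSort at h
      have hxform : ∀ j : Fin n,
          ((fun j => ((x j : ℝ))) ∘ Tuple.sort (fun i => -((x i : ℝ)))) j = ((sx j : ℕ) : ℝ) :=
        fun j => rfl
      have hyform : ∀ j : Fin n,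
          ((fun j => ((y j : ℝ))) ∘ Tuple.sort (fun i => -((y i : ℝ)))) j = ((sy j : ℕ) : ℝ) :=
        fun j => rfl
      rw [Finset.sum_congr rfl (fun j _ => hxform j),
        Finset.sum_congr rfl (fun j _ => hyform j)] at h
      have h2 : ((pSum sy k : ℕ) : ℝ) ≤ ((pSum sx k : ℕ) : ℝ) := by
        unfold pSum
        push_cast
        exact h
      exact_mod_cast h2
    · rw [hk', hsumP]
  calc orientationCount x = gR x := orientationCount_eq_gR x
    _ = gR sx := by rw [hsx, gR_perm σ x]
    _ ≤ gR sy := gR_chain (∑ k ∈ Finset.range (n + 1), (pSum sx k - pSum sy k))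
        sx sy le_rfl hxa hya hdom hsumP
    _ = gR y := by rw [hsy, gR_perm τ y]
    _ = orientationCount y := (orientationCount_eq_gR y).symm
end
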